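/- With P a product of linear forms with non-negative coefficients in r variables as above, the abscissa of convergence of ζ(P;s) = ∑_{x̄=1}^∞ P(x̄)^{-s} equals r/κ if and only if every non-empty subpolynomial Q of P satisfies r(Q)/κ(Q) ≥ r/κ. -/

import Mathlib

open Finset


lemma summable_pnat_rpow {u : ℝ} : Summable (fun n : ℕ+ => (n:ℝ)^u) ↔ u < -1 := by
  rw [← Equiv.pnatEquivNat.symm.summable_iff]
  have h : ((fun n : ℕ+ => (n:ℝ)^u) ∘ Equiv.pnatEquivNat.symm)
      = fun m : ℕ => (fun k : ℕ => (k:ℝ)^u) (m + 1) := by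
    funext m
    simp [Equiv.pnatEquivNat, Nat.succPNat]
  rw [h, summable_nat_add_iff (f := fun k : ℕ => (k:ℝ)^u) 1, Real.summable_nat_rpow]

lemma summable_pi_prod {g : ℕ+ → ℝ} (hg0 : ∀ n, 0 ≤ g n) (hg : Summable g) (m : ℕ) :
    Summable (fun x : Fin m → ℕ+ => ∏ j, g (x j)) := by
  induction m with
  | zero => exact Summable.of_finite
  | succ m ih =>
      have ih0 : ∀ x : Fin m → ℕ+, 0 ≤ ∏ j, g (x j) :=
        fun x => Finset.prod_nonneg fun j _ => hg0 _
      have h2 : Summable (fun p : ℕ+ × (Fin m → ℕ+) => g p.1 * ∏ j, g (p.2 j)) :=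
        Summable.mul_of_nonneg (f := g) (g := fun x : Fin m → ℕ+ => ∏ j, g (x j))
          hg ih hg0 ih0
      refine ((Fin.consEquiv (fun _ : Fin (m+1) => ℕ+)).summable_iff).mp (h2.congr ?_)
      intro p
      show g p.1 * ∏ j, g (p.2 j) = ∏ j : Fin (m+1), g ((Fin.consEquiv (fun _ : Fin (m+1) => ℕ+)) p j)
      show g p.1 * ∏ j, g (p.2 j) = ∏ j : Fin (m+1), g ((Fin.cons p.1 p.2 : Fin (m+1) → ℕ+) j)
      rw [Fin.prod_univ_succ]
      simp

lemma mellin_not_summable {r κ : ℕ} (a : Fin κ → Fin r → ℝ)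
    (hnn : ∀ i j, 0 ≤ a i j) (hpos : ∀ i, ∃ j, 0 < a i j)
    (S : Finset (Fin r)) (hS : S.Nonempty) {s : ℝ}
    (hsl : s * (((univ.filter fun i : Fin κ => ∃ j ∈ S, 0 < a i j)).card : ℝ) < (S.card : ℝ)) :
    ¬ Summable (fun x : Fin r → ℕ+ =>
        (∏ i, ∑ j, a i j * ((x j : ℕ) : ℝ)) ^ (-s)) := by
  classical
  intro hsum
  set P : (Fin r → ℕ+) → ℝ := fun x => ∏ i, ∑ j, a i j * ((x j : ℕ) : ℝ) with hP
  -- positivity of each linear form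
  have hxpos : ∀ (x : Fin r → ℕ+) (j : Fin r), (0:ℝ) < ((x j : ℕ) : ℝ) := by
    intro x j
    exact_mod_cast (x j).pos
  have hx1 : ∀ (x : Fin r → ℕ+) (j : Fin r), (1:ℝ) ≤ ((x j : ℕ) : ℝ) := by
    intro x j
    exact_mod_cast (x j).one_le
  have hLpos : ∀ (x : Fin r → ℕ+) i, (0:ℝ) < ∑ j, a i j * ((x j : ℕ) : ℝ) := by
    intro x i
    obtain ⟨j, hj⟩ := hpos i
    refine Finset.sum_pos' (fun j _ => mul_nonneg (hnn i j) (hxpos x j).le) ⟨j, mem_univ j, ?_⟩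
    exact mul_pos hj (hxpos x j)
  have hPpos : ∀ x, 0 < P x := fun x => Finset.prod_pos fun i _ => hLpos x i
  set F : Finset (Fin κ) := univ.filter fun i : Fin κ => ∃ j ∈ S, 0 < a i j with hF
  set lam : ℕ := F.card with hlam
  obtain ⟨j0, hj0⟩ := hS
  -- the injection
  set I : Type := Σ n : ℕ+, ({j : Fin r // j ∈ S.erase j0} → Fin n) with hI
  set Φ : I → (Fin r → ℕ+) := fun p j =>
    if h : j ∈ S.erase j0 then ⟨(p.2 ⟨j, h⟩ : ℕ) + 1, Nat.succ_pos _⟩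
    else if j = j0 then p.1 else 1 with hΦ
  have hΦj0 : ∀ p : I, Φ p j0 = p.1 := by
    intro p
    simp [hΦ, Finset.notMem_erase]
  have hΦle : ∀ (p : I) (j : Fin r), Φ p j ≤ p.1 := by
    intro p j
    by_cases h : j ∈ S.erase j0
    · have hlt : ((p.2 ⟨j, h⟩ : ℕ)) < (p.1 : ℕ) := (p.2 ⟨j, h⟩).2
      simp only [hΦ, dif_pos h]
      rw [← PNat.coe_le_coe]
      exact (congrArg PNat.val (dif_pos h)).trans_le hlt
    · by_cases h2 : j = j0
      · simp [hΦ, h, h2]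
      · simp only [hΦ, dif_neg h, if_neg h2]
        exact (dif_neg h).trans_le p.1.one_le
  have hΦinj : Function.Injective Φ := by
    rintro ⟨n, z⟩ ⟨m, w⟩ h
    have hnm : n = m := by
      have := congrFun h j0
      rwa [hΦj0, hΦj0] at this
    subst hnm
    have hzw : z = w := by
      funext j
      have := congrFun h j
      simp only [hΦ, dif_pos j.2] at this
      have key : ∀ (v : {j // j ∈ S.erase j0} → Fin n), ((Φ ⟨n, v⟩ (j : Fin r) : ℕ)) = (v j : ℕ) + 1 :=
        fun v => congrArg PNat.val (dif_pos j.2)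
      have : ((z j : ℕ) + 1 : ℕ) = (w j : ℕ) + 1 := (key z).symm.trans ((congrArg PNat.val this).trans (key w))
      exact Fin.ext (by omega)
    rw [hzw]
  -- upper bound for P ∘ Φ
  set c : Fin κ → ℝ := fun i => ∑ j, a i j with hc
  have hcpos : ∀ i, 0 < c i := by
    intro i
    obtain ⟨j, hj⟩ := hpos i
    exact Finset.sum_pos' (fun j _ => hnn i j) ⟨j, mem_univ j, hj⟩
  set B : ℝ := ∏ i, c i with hB
  have hBpos : 0 < B := Finset.prod_pos fun i _ => hcpos i
  have hPle : ∀ p : I, P (Φ p) ≤ B * ((p.1 : ℕ) : ℝ) ^ (lam : ℕ) := by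
    intro p
    have hn1 : (1:ℝ) ≤ ((p.1 : ℕ) : ℝ) := by exact_mod_cast p.1.one_le
    have hfac : ∀ i, (∑ j, a i j * ((Φ p j : ℕ) : ℝ))
        ≤ c i * ((p.1 : ℕ) : ℝ) ^ (if i ∈ F then 1 else 0 : ℕ) := by
      intro i
      by_cases hi : i ∈ F
      · simp only [if_pos hi, pow_one]
        rw [hc]
        rw [Finset.sum_mul]
        refine Finset.sum_le_sum fun j _ => ?_
        have : ((Φ p j : ℕ) : ℝ) ≤ ((p.1 : ℕ) : ℝ) := by exact_mod_cast hΦle p j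
        exact mul_le_mul_of_nonneg_left this (hnn i j)
      · simp only [if_neg hi, pow_zero, mul_one, hc]
        refine Finset.sum_le_sum fun j _ => ?_
        by_cases hjS : j ∈ S
        · have : a i j = 0 := by
            by_contra hne
            exact hi (Finset.mem_filter.mpr ⟨mem_univ i, ⟨j, hjS, lt_of_le_of_ne (hnn i j) (Ne.symm hne)⟩⟩)
          simp [this]
        · have h1 : j ∉ S.erase j0 := fun h => hjS (Finset.mem_of_mem_erase h)
          have h2 : j ≠ j0 := fun h => hjS (h ▸ hj0)
          have hone : Φ p j = 1 := by
            simp only [hΦ]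
            exact (dif_neg h1).trans (if_neg h2)
          rw [hone]
          simp
    calc P (Φ p) ≤ ∏ i, (c i * ((p.1 : ℕ) : ℝ) ^ (if i ∈ F then 1 else 0 : ℕ)) := by
          refine Finset.prod_le_prod (fun i _ => (hLpos _ i).le) (fun i _ => hfac i)
      _ = B * ((p.1 : ℕ) : ℝ) ^ (lam : ℕ) := by
          rw [Finset.prod_mul_distrib, Finset.prod_pow_eq_pow_sum]
          congr 2
          rw [Finset.sum_boole]
          simp [hlam]
  rcases le_or_gt s 0 with hs | hs
  · -- s ≤ 0 : terms bounded below by a positive constant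
    choose wit hwit using hpos
    set cl : ℝ := ∏ i, a i (wit i) with hcl
    have hclpos : 0 < cl := Finset.prod_pos fun i _ => hwit i
    have hPge : ∀ x, cl ≤ P x := by
      intro x
      refine Finset.prod_le_prod (fun i _ => (hwit i).le) (fun i _ => ?_)
      calc a i (wit i) = a i (wit i) * 1 := by ring
        _ ≤ a i (wit i) * ((x (wit i) : ℕ) : ℝ) :=
            mul_le_mul_of_nonneg_left (hx1 x _) (hwit i).le
        _ ≤ ∑ j, a i j * ((x j : ℕ) : ℝ) :=
            Finset.single_le_sum (fun j _ => mul_nonneg (hnn i j) (hxpos x j).le) (mem_univ _)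
    set δ : ℝ := cl ^ (-s) with hδ
    have hδpos : 0 < δ := Real.rpow_pos_of_pos hclpos _
    have hge : ∀ x, δ ≤ P x ^ (-s) := fun x =>
      Real.rpow_le_rpow hclpos.le (hPge x) (neg_nonneg.mpr hs)
    haveI : Nonempty (Fin r) := ⟨j0⟩
    haveI : Infinite (Fin r → ℕ+) := by infer_instance
    have htend := hsum.tendsto_cofinite_zero
    have hev := htend.eventually_lt_const hδpos
    rw [Filter.eventually_cofinite] at hev
    have huniv : {x : Fin r → ℕ+ | ¬ P x ^ (-s) < δ} = Set.univ := by
      ext x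
      simp only [Set.mem_setOf_eq, Set.mem_univ, iff_true, not_lt]
      exact hge x
    rw [huniv] at hev
    exact Set.infinite_univ hev
  · -- 0 < s
    have hcomp : Summable ((fun x : Fin r → ℕ+ => P x ^ (-s)) ∘ Φ) :=
      hsum.comp_injective hΦinj
    set t : ℝ := s * (lam : ℝ) with ht
    have hnpos : ∀ n : ℕ+, (0:ℝ) < ((n : ℕ) : ℝ) := by
      intro n
      exact_mod_cast n.pos
    have hght : ∀ p : I, B ^ (-s) * ((p.1 : ℕ) : ℝ) ^ (-t) ≤ P (Φ p) ^ (-s) := by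
      intro p
      have h1 : (B * ((p.1 : ℕ) : ℝ) ^ (lam : ℕ)) ^ (-s) ≤ P (Φ p) ^ (-s) :=
        Real.rpow_le_rpow_of_nonpos (hPpos _) (hPle p) (neg_nonpos.mpr hs.le)
      refine le_trans (le_of_eq ?_) h1
      rw [Real.mul_rpow hBpos.le (pow_nonneg (hnpos p.1).le _)]
      congr 1
      rw [← Real.rpow_natCast ((p.1 : ℕ) : ℝ) lam, ← Real.rpow_mul (hnpos p.1).le]
      congr 1
      rw [ht]
      ring
    have h0 : ∀ p : I, 0 ≤ B ^ (-s) * ((p.1 : ℕ) : ℝ) ^ (-t) := fun p =>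
      mul_nonneg (Real.rpow_nonneg hBpos.le _) (Real.rpow_nonneg (hnpos p.1).le _)
    have hsum2 : Summable (fun p : I => B ^ (-s) * ((p.1 : ℕ) : ℝ) ^ (-t)) :=
      Summable.of_nonneg_of_le h0 hght hcomp
    obtain ⟨-, hsum3⟩ := (summable_sigma_of_nonneg h0).mp hsum2
    set e : ℕ := (S.erase j0).card with he
    have hcard : ∀ n : ℕ+, Nat.card ({j : Fin r // j ∈ S.erase j0} → Fin n) = (n : ℕ) ^ e := by
      intro n
      rw [Nat.card_eq_fintype_card, Fintype.card_fun, Fintype.card_coe, Fintype.card_fin]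
    have hsum4 : Summable (fun n : ℕ+ => B ^ (-s) * ((n : ℕ) : ℝ) ^ ((e : ℝ) - t)) := by
      refine hsum3.congr fun n => ?_
      have hrw : ∑' (y : { j // j ∈ S.erase j0 } → Fin (n:ℕ)), B ^ (-s) * (((⟨n, y⟩ : I).fst : ℕ) : ℝ) ^ (-t)
          = ∑' (_ : { j // j ∈ S.erase j0 } → Fin (n:ℕ)), B ^ (-s) * ((n : ℕ) : ℝ) ^ (-t) :=
        tsum_congr fun y => rfl
      rw [hrw, tsum_const, hcard n, nsmul_eq_mul]
      push_cast
      rw [show (e : ℝ) - t = (e : ℝ) + (-t) from sub_eq_add_neg _ _,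
        Real.rpow_add (hnpos n), ← Real.rpow_natCast ((n : ℕ) : ℝ) e]
      ring
    have hBne : B ^ (-s) ≠ 0 := ne_of_gt (Real.rpow_pos_of_pos hBpos _)
    have hsum5 : Summable (fun n : ℕ+ => ((n : ℕ) : ℝ) ^ ((e : ℝ) - t)) :=
      (summable_mul_left_iff hBne).mp hsum4
    have hu : (e : ℝ) - t < -1 := summable_pnat_rpow.mp hsum5
    have hcardS : 1 ≤ S.card := Finset.card_pos.mpr ⟨j0, hj0⟩
    have heS : (e : ℝ) = (S.card : ℝ) - 1 := by
      rw [he, Finset.card_erase_of_mem hj0]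
      push_cast [Nat.cast_sub hcardS]
      ring
    rw [heS] at hu
    linarith


lemma exists_weights {r κ : ℕ} (hr : 0 < r) (hκ : 0 < κ) (a : Fin κ → Fin r → ℝ)
    (hnn : ∀ i j, 0 ≤ a i j) (hpos : ∀ i, ∃ j, 0 < a i j)
    (hcond : ∀ T : Finset (Fin r),
      r * (univ.filter fun i : Fin κ => ∀ j ∉ T, a i j = 0).card ≤ κ * T.card) :
    ∃ w : Fin κ → Fin r → ℝ, (∀ i j, 0 ≤ w i j) ∧ (∀ i j, a i j = 0 → w i j = 0) ∧
      (∀ i, ∑ j, w i j = 1) ∧ (∀ j, ∑ i, w i j = (κ : ℝ) / r) := by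
  classical
  set supp : Fin κ → Finset (Fin r) := fun i => univ.filter fun j => 0 < a i j with hsupp
  set t : Fin κ × Fin r → Finset (Fin r × Fin κ) := fun p => (supp p.1) ×ˢ univ with htdef
  have hall : ∀ s : Finset (Fin κ × Fin r), s.card ≤ (s.biUnion t).card := by
    intro s
    set I : Finset (Fin κ) := s.image Prod.fst with hI
    set T : Finset (Fin r) := I.biUnion supp with hT
    have hsub : s ⊆ I ×ˢ (univ : Finset (Fin r)) := by
      intro p hp
      exact mem_product.mpr ⟨mem_image_of_mem _ hp, mem_univ _⟩
    have h1 : s.card ≤ I.card * r := by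
      have := Finset.card_le_card hsub
      rwa [Finset.card_product, Finset.card_univ, Fintype.card_fin] at this
    have hbiU : s.biUnion t = T ×ˢ (univ : Finset (Fin κ)) := by
      ext q
      rw [Finset.mem_biUnion, Finset.mem_product]
      constructor
      · rintro ⟨p, hp, hq⟩
        have hq1 : q.1 ∈ supp p.1 := (Finset.mem_product.mp hq).1
        refine ⟨Finset.mem_biUnion.mpr ⟨p.1, Finset.mem_image_of_mem _ hp, hq1⟩, mem_univ _⟩
      · rintro ⟨hq1, -⟩
        obtain ⟨i, hiI, hqi⟩ := Finset.mem_biUnion.mp hq1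
        obtain ⟨p, hp, hpi⟩ := Finset.mem_image.mp hiI
        refine ⟨p, hp, Finset.mem_product.mpr ⟨by rwa [hpi], mem_univ _⟩⟩
    have hIT : I ⊆ univ.filter fun i => ∀ j ∉ T, a i j = 0 := by
      intro i hi
      refine mem_filter.mpr ⟨mem_univ _, fun j hj => ?_⟩
      by_contra hne
      exact hj (Finset.mem_biUnion.mpr ⟨i, hi,
        mem_filter.mpr ⟨mem_univ _, lt_of_le_of_ne (hnn i j) (Ne.symm hne)⟩⟩)
    have h2 : r * I.card ≤ κ * T.card :=
      le_trans (Nat.mul_le_mul_left r (Finset.card_le_card hIT)) (hcond T)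
    calc s.card ≤ I.card * r := h1
      _ = r * I.card := Nat.mul_comm _ _
      _ ≤ κ * T.card := h2
      _ = T.card * κ := Nat.mul_comm _ _
      _ = (s.biUnion t).card := by
          rw [hbiU, Finset.card_product, Finset.card_univ, Fintype.card_fin]
  obtain ⟨f, hfinj, hft⟩ := (Finset.all_card_le_biUnion_card_iff_exists_injective t).mp hall
  have hfbij : Function.Bijective f :=
    (Fintype.bijective_iff_injective_and_card f).mpr ⟨hfinj, by simp [Nat.mul_comm]⟩
  set cnt : Fin κ → Fin r → ℕ :=
    fun i j => (univ.filter fun u : Fin r => (f (i, u)).1 = j).card with hcnt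
  have hrow : ∀ i, ∑ j, cnt i j = r := by
    intro i
    have := Finset.card_eq_sum_card_fiberwise
      (f := fun u : Fin r => (f (i, u)).1) (s := univ) (t := univ) (fun x _ => mem_univ _)
    rw [Finset.card_univ, Fintype.card_fin] at this
    exact this.symm
  have hcol : ∀ j, ∑ i, cnt i j = κ := by
    intro j
    have key : (univ.filter fun p : Fin κ × Fin r => (f p).1 = j).card = ∑ i, cnt i j := by
      rw [Finset.card_eq_sum_card_fiberwise
        (f := fun p : Fin κ × Fin r => p.1) (s := _) (t := univ) (fun x _ => mem_univ _)]
      refine Finset.sum_congr rfl fun i _ => ?_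
      refine Finset.card_bij' (fun p _ => p.2) (fun u _ => (i, u)) ?_ ?_ ?_ ?_
      · rintro ⟨p1, p2⟩ hp
        simp only [Finset.mem_filter, Finset.mem_univ, true_and] at hp ⊢
        obtain ⟨h1, h2⟩ := hp
        subst h2
        exact h1
      · intro u hu
        simp only [Finset.mem_filter, Finset.mem_univ, true_and] at hu ⊢
        exact ⟨hu, trivial⟩
      · rintro ⟨p1, p2⟩ hp
        simp only [Finset.mem_filter, Finset.mem_univ, true_and] at hp
        obtain ⟨-, h2⟩ := hp
        subst h2
        rfl
      · intro u hu
        rfl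
    have key2 : (univ.filter fun p : Fin κ × Fin r => (f p).1 = j).card = κ := by
      have himg2 : Finset.image f (univ.filter fun p : Fin κ × Fin r => (f p).1 = j)
          = univ.filter fun q : Fin r × Fin κ => q.1 = j := by
        ext q
        simp only [Finset.mem_image, Finset.mem_filter, Finset.mem_univ, true_and]
        constructor
        · rintro ⟨p, hp, hpq⟩
          rw [← hpq]; exact hp
        · intro hq
          obtain ⟨p, hp⟩ := hfbij.2 q
          exact ⟨p, by rw [hp]; exact hq, hp⟩
      have hfil : (univ.filter fun q : Fin r × Fin κ => q.1 = j) = {j} ×ˢ univ := by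
        ext q
        simp [Finset.mem_product, Prod.ext_iff, eq_comm]
      rw [← Finset.card_image_of_injective _ hfinj, himg2, hfil, Finset.card_product]
      simp
    rw [← key, key2]
  refine ⟨fun i j => (cnt i j : ℝ) / r, fun i j => by positivity, ?_, ?_, ?_⟩
  · intro i j ha
    have : cnt i j = 0 := by
      rw [hcnt, Finset.card_eq_zero, Finset.filter_eq_empty_iff]
      intro u _
      intro hfu
      have := hft (i, u)
      rw [htdef] at this
      have h1 : (f (i, u)).1 ∈ supp i := (Finset.mem_product.mp this).1
      rw [hfu, hsupp] at h1
      have := (Finset.mem_filter.mp h1).2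
      rw [ha] at this
      exact lt_irrefl _ this
    simp [this]
  · intro i
    rw [← Finset.sum_div]
    rw [show (∑ j, (cnt i j : ℝ)) = ((∑ j, cnt i j : ℕ) : ℝ) by push_cast; ring]
    rw [hrow i]
    field_simp
  · intro j
    rw [← Finset.sum_div]
    rw [show (∑ i, (cnt i j : ℝ)) = ((∑ i, cnt i j : ℕ) : ℝ) by push_cast; ring]
    rw [hcol j]

lemma mellin_summable {r κ : ℕ} (hr : 0 < r) (hκ : 0 < κ) (a : Fin κ → Fin r → ℝ)
    (hnn : ∀ i j, 0 ≤ a i j) (hpos : ∀ i, ∃ j, 0 < a i j)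
    (w : Fin κ → Fin r → ℝ) (hw0 : ∀ i j, 0 ≤ w i j) (hwa : ∀ i j, a i j = 0 → w i j = 0)
    (hrow : ∀ i, ∑ j, w i j = 1) (hcol : ∀ j, ∑ i, w i j = (κ : ℝ) / r)
    {s : ℝ} (hs : 1 < s * ((κ : ℝ) / r)) :
    Summable (fun x : Fin r → ℕ+ =>
        (∏ i, ∑ j, a i j * ((x j : ℕ) : ℝ)) ^ (-s)) := by
  classical
  have hβpos : (0:ℝ) < (κ : ℝ) / r := by positivity
  have hspos : 0 < s := by nlinarith
  set β : ℝ := (κ : ℝ) / r with hβ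
  have hxpos : ∀ (x : Fin r → ℕ+) (j : Fin r), (0:ℝ) < ((x j : ℕ) : ℝ) := by
    intro x j
    exact_mod_cast (x j).pos
  have hLpos : ∀ (x : Fin r → ℕ+) i, (0:ℝ) < ∑ j, a i j * ((x j : ℕ) : ℝ) := by
    intro x i
    obtain ⟨j, hj⟩ := hpos i
    refine Finset.sum_pos' (fun j _ => mul_nonneg (hnn i j) (hxpos x j).le) ⟨j, mem_univ j, ?_⟩
    exact mul_pos hj (hxpos x j)
  -- per-factor geometric mean bound
  have hfac : ∀ (x : Fin r → ℕ+) i,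
      ∏ j, (a i j * ((x j : ℕ) : ℝ)) ^ (w i j) ≤ ∑ j, a i j * ((x j : ℕ) : ℝ) := by
    intro x i
    have h1 : ∏ j, (a i j * ((x j : ℕ) : ℝ)) ^ (w i j)
        ≤ ∏ j, (∑ j', a i j' * ((x j' : ℕ) : ℝ)) ^ (w i j) := by
      refine Finset.prod_le_prod (fun j _ => Real.rpow_nonneg (mul_nonneg (hnn i j) (hxpos x j).le) _)
        (fun j _ => ?_)
      refine Real.rpow_le_rpow (mul_nonneg (hnn i j) (hxpos x j).le) ?_ (hw0 i j)
      exact Finset.single_le_sum (fun j' _ => mul_nonneg (hnn i j') (hxpos x j').le) (mem_univ j)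
    have h2 : ∏ j, (∑ j', a i j' * ((x j' : ℕ) : ℝ)) ^ (w i j)
        = (∑ j', a i j' * ((x j' : ℕ) : ℝ)) ^ (∑ j, w i j) :=
      (Real.rpow_sum_of_pos (hLpos x i) _ _).symm
    rw [h2, hrow i, Real.rpow_one] at h1
    exact h1
  set A : ℝ := ∏ i, ∏ j, (a i j) ^ (w i j) with hA
  have hApos : 0 < A := by
    refine Finset.prod_pos fun i _ => Finset.prod_pos fun j _ => ?_
    rcases eq_or_lt_of_le (hnn i j) with h | h
    · rw [← h, hwa i j (by rw [← h]), Real.rpow_zero]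
      norm_num
    · exact Real.rpow_pos_of_pos h _
  -- lower bound for P
  have hPge : ∀ x : Fin r → ℕ+,
      A * ∏ j, ((x j : ℕ) : ℝ) ^ β ≤ ∏ i, ∑ j, a i j * ((x j : ℕ) : ℝ) := by
    intro x
    have hGsplit : ∀ i, ∏ j, (a i j * ((x j : ℕ) : ℝ)) ^ (w i j)
        = (∏ j, (a i j) ^ (w i j)) * ∏ j, ((x j : ℕ) : ℝ) ^ (w i j) := by
      intro i
      rw [← Finset.prod_mul_distrib]
      refine Finset.prod_congr rfl fun j _ => ?_
      rw [Real.mul_rpow (hnn i j) (hxpos x j).le]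
    calc A * ∏ j, ((x j : ℕ) : ℝ) ^ β
        = ∏ i, ((∏ j, (a i j) ^ (w i j)) * ∏ j, ((x j : ℕ) : ℝ) ^ (w i j)) := by
          rw [Finset.prod_mul_distrib, ← hA]
          congr 1
          rw [Finset.prod_comm]
          refine Finset.prod_congr rfl fun j _ => ?_
          rw [← Real.rpow_sum_of_pos (hxpos x j), hcol j]
      _ = ∏ i, ∏ j, (a i j * ((x j : ℕ) : ℝ)) ^ (w i j) := by
          refine Finset.prod_congr rfl fun i _ => (hGsplit i).symm
      _ ≤ ∏ i, ∑ j, a i j * ((x j : ℕ) : ℝ) := by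
          refine Finset.prod_le_prod (fun i _ => Finset.prod_nonneg fun j _ =>
            Real.rpow_nonneg (mul_nonneg (hnn i j) (hxpos x j).le) _) (fun i _ => hfac x i)
  -- comparison
  have hgsum : Summable (fun n : ℕ+ => (n : ℝ) ^ (-(s * β))) := by
    rw [summable_pnat_rpow]
    linarith
  have hg0 : ∀ n : ℕ+, (0:ℝ) ≤ (n : ℝ) ^ (-(s * β)) := fun n =>
    Real.rpow_nonneg (by exact_mod_cast n.pos.le) _
  have hprodsum : Summable (fun x : Fin r → ℕ+ => ∏ j, ((x j : ℕ) : ℝ) ^ (-(s * β))) := by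
    have := summable_pi_prod hg0 hgsum r
    exact this
  have hfinal : Summable (fun x : Fin r → ℕ+ =>
      A ^ (-s) * ∏ j, ((x j : ℕ) : ℝ) ^ (-(s * β))) := hprodsum.mul_left _
  refine Summable.of_nonneg_of_le (fun x => Real.rpow_nonneg (Finset.prod_nonneg fun i _ =>
    (hLpos x i).le) _) (fun x => ?_) hfinal
  have hprodβpos : 0 < ∏ j, ((x j : ℕ) : ℝ) ^ β :=
    Finset.prod_pos fun j _ => Real.rpow_pos_of_pos (hxpos x j) _
  calc (∏ i, ∑ j, a i j * ((x j : ℕ) : ℝ)) ^ (-s)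
      ≤ (A * ∏ j, ((x j : ℕ) : ℝ) ^ β) ^ (-s) :=
        Real.rpow_le_rpow_of_nonpos (by positivity) (hPge x) (neg_nonpos.mpr hspos.le)
    _ = A ^ (-s) * ∏ j, ((x j : ℕ) : ℝ) ^ (-(s * β)) := by
        rw [Real.mul_rpow hApos.le hprodβpos.le]
        congr 1
        rw [← Real.finset_prod_rpow _ _ (fun j _ => Real.rpow_nonneg (hxpos x j).le _) (-s)]
        refine Finset.prod_congr rfl fun j _ => ?_
        rw [← Real.rpow_mul (hxpos x j).le]
        congr 1
        ring

/-- With `P = P₁ ⋯ P_κ` a product of linear forms with non-negative coefficients in `r`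
variables (each form having a positive coefficient, every variable occurring), the abscissa
of convergence of `ζ(P;s) = ∑_{x̄ ≥ 1} P(x̄)^{-s}` equals `r/κ` if and only if every
non-empty subpolynomial `Q` (given by a subset `S` of the variables, with `r(Q) = |S|`
and `κ(Q)` the number of forms supported on `S`) satisfies `r(Q)/κ(Q) ≥ r/κ`. -/
theorem mellin_abscissa_eq_r_div_kappa_iff {r κ : ℕ} (hr : 0 < r) (hκ : 0 < κ)
    (a : Fin κ → Fin r → ℝ)
    (hnn : ∀ i j, 0 ≤ a i j)
    (hpos : ∀ i, ∃ j, 0 < a i j)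
    (hvar : ∀ j, ∃ i, 0 < a i j) :
    sInf {s : ℝ | Summable (fun x : Fin r → ℕ+ =>
        (∏ i, ∑ j, a i j * ((x j : ℕ) : ℝ)) ^ (-s))} = (r : ℝ) / κ ↔
      ∀ S : Finset (Fin r),
        0 < Nat.card {i : Fin κ // ∀ j ∉ S, a i j = 0} →
        (r : ℝ) / κ ≤ (S.card : ℝ) / (Nat.card {i : Fin κ // ∀ j ∉ S, a i j = 0}) := by
  classical
  have hrR : (0:ℝ) < r := by exact_mod_cast hr
  have hκR : (0:ℝ) < κ := by exact_mod_cast hκ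
  set Sset : Set ℝ := {s : ℝ | Summable (fun x : Fin r → ℕ+ =>
      (∏ i, ∑ j, a i j * ((x j : ℕ) : ℝ)) ^ (-s))} with hSset
  have hNat : ∀ S : Finset (Fin r), Nat.card {i : Fin κ // ∀ j ∉ S, a i j = 0}
      = (univ.filter fun i : Fin κ => ∀ j ∉ S, a i j = 0).card := by
    intro S
    rw [Nat.card_eq_fintype_card]
    convert Fintype.card_subtype _
  constructor
  · -- forward, by contraposition
    intro habs
    by_contra hC
    push_neg at hC
    obtain ⟨S, hk0, hlt⟩ := hC
    rw [hNat] at hk0 hlt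
    set kS : ℕ := (univ.filter fun i : Fin κ => ∀ j ∉ S, a i j = 0).card with hkS
    have hkSR : (0:ℝ) < kS := by exact_mod_cast hk0
    -- S ≠ univ
    have hSne : S ≠ univ := by
      rintro rfl
      have hkk : kS = κ := by
        rw [hkS]
        rw [Finset.filter_true_of_mem (fun i _ => fun j hj => absurd (mem_univ j) hj)]
        simp
      rw [hkk] at hlt
      rw [Finset.card_univ, Fintype.card_fin] at hlt
      exact absurd le_rfl (not_le.mpr hlt)
    have hScne : (Sᶜ : Finset (Fin r)).Nonempty := by
      rw [← Finset.card_pos, Finset.card_compl, Fintype.card_fin]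
      have : S.card < r := by
        rcases lt_or_eq_of_le (Finset.card_le_card (Finset.subset_univ S)) with h | h
        · simpa using h
        · exact absurd (Finset.card_eq_iff_eq_univ S |>.mp (by simpa using h)) hSne
      omega
    -- lam' = κ - kS
    set lam' : ℕ := (univ.filter fun i : Fin κ => ∃ j ∈ Sᶜ, 0 < a i j).card with hlam'
    have hfilteq : (univ.filter fun i : Fin κ => ∃ j ∈ (Sᶜ : Finset (Fin r)), 0 < a i j)
        = (univ.filter fun i : Fin κ => ¬ ∀ j ∉ S, a i j = 0) := by
      refine Finset.filter_congr fun i _ => ?_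
      constructor
      · rintro ⟨j, hjc, hj⟩ hall
        exact absurd (hall j (Finset.mem_compl.mp hjc)) (ne_of_gt hj)
      · intro hnall
        push_neg at hnall
        obtain ⟨j, hjS, hne⟩ := hnall
        exact ⟨j, Finset.mem_compl.mpr hjS, lt_of_le_of_ne (hnn i j) (Ne.symm hne)⟩
    have hsum_card : kS + lam' = κ := by
      rw [hlam', hfilteq, hkS]
      rw [Finset.card_filter_add_card_filter_not]
      simp
    have hlam'pos : 0 < lam' := by
      rcases Nat.eq_zero_or_pos lam' with h | h
      swap
      · exact h
      · exfalso
        have hkk : kS = κ := by omega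
        have hSuniv : S = univ := by
          refine Finset.eq_univ_iff_forall.mpr fun j => ?_
          obtain ⟨i, hi⟩ := hvar j
          have hiS : i ∈ univ.filter fun i : Fin κ => ∀ j ∉ S, a i j = 0 := by
            have : (univ.filter fun i : Fin κ => ∀ j ∉ S, a i j = 0) = univ := by
              apply Finset.eq_univ_of_card
              rw [← hkS, hkk]
              exact (Fintype.card_fin κ).symm
            rw [this]
            exact mem_univ i
          by_contra hjS
          exact absurd ((Finset.mem_filter.mp hiS).2 j hjS) (ne_of_gt hi)
        exact hSne hSuniv
    have hlam'R : (0:ℝ) < lam' := by exact_mod_cast hlam'pos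
    have hcardcomp : ((Sᶜ : Finset (Fin r)).card : ℝ) = (r : ℝ) - S.card := by
      rw [Finset.card_compl, Fintype.card_fin]
      have := Finset.card_le_card (Finset.subset_univ S)
      rw [Finset.card_univ, Fintype.card_fin] at this
      push_cast [Nat.cast_sub this]
      ring
    have hlamR : (lam' : ℝ) = (κ : ℝ) - kS := by
      have : (kS : ℝ) + lam' = κ := by exact_mod_cast hsum_card
      linarith
    -- ρ > r/κ
    set ρ : ℝ := ((Sᶜ : Finset (Fin r)).card : ℝ) / lam' with hρdef
    have hρ : (r : ℝ) / κ < ρ := by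
      rw [hρdef, div_lt_div_iff₀ hκR hlam'R, hcardcomp, hlamR]
      have h1 : (S.card : ℝ) / kS < r / κ := hlt
      rw [div_lt_div_iff₀ hkSR hκR] at h1
      nlinarith
    have hmem : ∀ s ∈ Sset, ρ ≤ s := by
      intro s hs
      by_contra hlt2
      push_neg at hlt2
      refine mellin_not_summable a hnn hpos Sᶜ hScne ?_ hs
      rw [hρdef] at hlt2
      exact (lt_div_iff₀ hlam'R).mp hlt2
    rcases Set.eq_empty_or_nonempty Sset with hE | hNE
    · rw [hE, Real.sInf_empty] at habs
      exact absurd habs.symm (ne_of_gt (by positivity))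
    · have : ρ ≤ sInf Sset := le_csInf hNE hmem
      rw [habs] at this
      exact absurd this (not_le.mpr hρ)
  · -- backward
    intro hC
    have hcond : ∀ T : Finset (Fin r),
        r * (univ.filter fun i : Fin κ => ∀ j ∉ T, a i j = 0).card ≤ κ * T.card := by
      intro T
      set kT := (univ.filter fun i : Fin κ => ∀ j ∉ T, a i j = 0).card with hkT
      rcases Nat.eq_zero_or_pos kT with h | h
      · rw [h]; simp
      · have := hC T (by rw [hNat]; exact h)
        rw [hNat, ← hkT] at this
        have hkTR : (0:ℝ) < kT := by exact_mod_cast h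
        rw [div_le_div_iff₀ hκR hkTR] at this
        have : (r : ℝ) * kT ≤ κ * T.card := by linarith
        exact_mod_cast this
    obtain ⟨w, hw0, hwa, hrow, hcol⟩ := exists_weights hr hκ a hnn hpos hcond
    have hval : ∀ s : ℝ, (r:ℝ)/κ < s → s ∈ Sset := by
      intro s hs
      refine mellin_summable hr hκ a hnn hpos w hw0 hwa hrow hcol ?_
      rw [show (1:ℝ) = ((r:ℝ)/κ) * ((κ:ℝ)/r) by field_simp]
      exact mul_lt_mul_of_pos_right hs (by positivity)
    have hnval : ∀ s ∈ Sset, (r:ℝ)/κ ≤ s := by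
      intro s hs
      by_contra hlt2
      push_neg at hlt2
      haveI : Nonempty (Fin r) := ⟨⟨0, hr⟩⟩
      refine mellin_not_summable a hnn hpos univ univ_nonempty ?_ hs
      have hfl : (univ.filter fun i : Fin κ => ∃ j ∈ (univ : Finset (Fin r)), 0 < a i j) = univ := by
        refine Finset.filter_true_of_mem fun i _ => ?_
        obtain ⟨j, hj⟩ := hpos i
        exact ⟨j, mem_univ j, hj⟩
      rw [hfl, Finset.card_univ, Finset.card_univ, Fintype.card_fin, Fintype.card_fin]
      rw [lt_div_iff₀ hκR] at hlt2
      linarith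
    have hNE : Sset.Nonempty := ⟨(r:ℝ)/κ + 1, hval _ (by linarith)⟩
    have hBdd : BddBelow Sset := ⟨(r:ℝ)/κ, fun s hs => hnval s hs⟩
    refine le_antisymm ?_ (le_csInf hNE hnval)
    refine le_of_forall_pos_le_add fun ε hε => ?_
    exact csInf_le hBdd (hval _ (by linarith))
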